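/- Let T = node(T_a, T_b) be a full binary tree with n leaves (so T_a and T_b are its two maximal pending subtrees, with n_a and n_b leaves respectively). If T has minimal Colless index for n leaves, i.e. C(T) = c(n), then C(T_a) = c(n_a) and C(T_b) = c(n_b), i.e. both maximal pending subtrees have minimal Colless index for their respective numbers of leaves. -/
import Mathlib


/-- Full binary trees: either a single leaf, or a node with two full binary subtrees. -/
inductive FBT : Type
  | leaf : FBT
  | node : FBT → FBT → FBT

namespace FBT

/-- Number of leaves of a full binary tree. -/
def leaves : FBT → ℕ
  | leaf => 1
  | node a b => leaves a + leaves b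

/-- The Colless index: the sum over internal nodes of the absolute difference of the
numbers of leaves of the two maximal pending subtrees. -/
def colless : FBT → ℕ
  | leaf => 0
  | node a b => colless a + colless b + Nat.dist (leaves a) (leaves b)

end FBT

/-- The minimal Colless index over all full binary trees with `n` leaves. -/
noncomputable def minColless (n : ℕ) : ℕ :=
  sInf {m : ℕ | ∃ T : FBT, T.leaves = n ∧ T.colless = m}

lemma minColless_le (T : FBT) : minColless T.leaves ≤ T.colless :=
  Nat.sInf_le ⟨T, rfl, rfl⟩

lemma minColless_attained (T : FBT) :
    ∃ T' : FBT, T'.leaves = T.leaves ∧ T'.colless = minColless T.leaves :=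
  Nat.sInf_mem (s := {m : ℕ | ∃ T' : FBT, T'.leaves = T.leaves ∧ T'.colless = m})
    ⟨T.colless, T, rfl, rfl⟩

theorem subtrees_of_min_colless_are_min (a b : FBT)
    (h : (FBT.node a b).colless = minColless ((FBT.node a b).leaves)) :
    a.colless = minColless a.leaves ∧ b.colless = minColless b.leaves := by
  obtain ⟨a', ha1, ha2⟩ := minColless_attained a
  obtain ⟨b', hb1, hb2⟩ := minColless_attained b
  have hA : (FBT.node a' b).leaves = (FBT.node a b).leaves := by
    simp [FBT.leaves, ha1]
  have hB : (FBT.node a b').leaves = (FBT.node a b).leaves := by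
    simp [FBT.leaves, hb1]
  have h1 : minColless ((FBT.node a b).leaves) ≤ (FBT.node a' b).colless := by
    rw [← hA]; exact minColless_le _
  have h2 : minColless ((FBT.node a b).leaves) ≤ (FBT.node a b').colless := by
    rw [← hB]; exact minColless_le _
  rw [← h] at h1 h2
  simp only [FBT.colless, ha1, ha2, hb1, hb2] at h1 h2
  constructor
  · exact le_antisymm (by omega) (minColless_le a)
  · exact le_antisymm (by omega) (minColless_le b)
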